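/- Let F = T^2X^2 + TX^2Y ∈ Q_S. Then there exist no elements g_0, g_1 ∈ R = k[x,y] (homogeneous or not) such that t^2 g_0 + t g_1 + y ∈ Ann_S(F). Consequently, C = S/Ann_S(F) is not a free extension of A = k[t]/(t^3) with fiber B = k[x,y]/Ann_R(X^2) = k[x,y]/(x^3, y): it fails the condition that for every g ∈ Ann_R(X^2) there exist g_0, g_1 ∈ R with t^2g_0 + tg_1 + g ∈ Ann_S(F). -/

import Mathlib

open MvPolynomial

noncomputable section

variable {k : Type*} [Field k]

open Classical in
/-- Contraction action of `g ∈ k[x_1,…]` on `F ∈ k[X_1,…]`: the monomial `x^a` sends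
`X^b` to `X^(b-a)` if `a ≤ b` and to `0` otherwise, extended bilinearly. -/
def contract {σ : Type*} (g F : MvPolynomial σ k) : MvPolynomial σ k :=
  ∑ a ∈ g.support, ∑ b ∈ F.support,
    if a ≤ b then monomial (b - a) (g.coeff a * F.coeff b) else 0

/-- The annihilator `Ann(F) = {g : g ∘ F = 0}` (a set; it is in fact an ideal). -/
def annSet {σ : Type*} (F : MvPolynomial σ k) : Set (MvPolynomial σ k) :=
  {g | contract g F = 0}

/-- The annihilator ideal of `F` (since `annSet F` is closed under the ideal operations,
the span coincides with it). -/
def annIdeal {σ : Type*} (F : MvPolynomial σ k) : Ideal (MvPolynomial σ k) :=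
  Ideal.span (annSet F)

/-- `C` is a free module over `A` via the ring map `ι : A → C`. -/
def freeVia {A C : Type*} [CommRing A] [CommRing C] (ι : A →+* C) : Prop :=
  @Module.Free A C _ _ (Module.compHom C ι)

variable [CharZero k]

lemma coeff_contract {σ : Type*} (g F : MvPolynomial σ k) (e : σ →₀ ℕ) :
    coeff e (contract g F)
      = ∑ b ∈ F.support, if e ≤ b then coeff (b - e) g * coeff b F else 0 := by
  classical
  rw [contract]
  simp only [coeff_sum, apply_ite (coeff e), coeff_monomial, coeff_zero]
  rw [Finset.sum_comm]
  refine Finset.sum_congr rfl fun b _ => ?_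
  by_cases hb : e ≤ b
  · rw [if_pos hb]
    have : ∀ a ∈ g.support,
        (if a ≤ b then (if b - a = e then coeff a g * coeff b F else 0) else 0)
          = if a = b - e then coeff a g * coeff b F else 0 := by
      intro a _
      by_cases hab : a ≤ b
      · rw [if_pos hab]
        congr 1
        rw [tsub_eq_iff_eq_add_of_le hab, eq_comm, eq_iff_iff]
        constructor
        · rintro rfl; rw [add_tsub_cancel_of_le hb]
        · rintro rfl; rw [add_tsub_cancel_left]
      · rw [if_neg hab, eq_comm]
        rw [if_neg]
        rintro rfl
        exact hab (tsub_le_self)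
    rw [Finset.sum_congr rfl this, Finset.sum_ite_eq' g.support (b - e)
      (fun a => coeff a g * coeff b F)]
    by_cases hmem : b - e ∈ g.support
    · rw [if_pos hmem]
    · rw [if_neg hmem, notMem_support_iff.mp hmem, zero_mul]
  · rw [if_neg hb]
    refine Finset.sum_eq_zero fun a _ => ?_
    by_cases hab : a ≤ b
    · rw [if_pos hab, if_neg]
      rintro rfl
      exact hb tsub_le_self
    · rw [if_neg hab]

lemma coeff_contract_superset {σ : Type*} (g F : MvPolynomial σ k) (e : σ →₀ ℕ)
    {U : Finset (σ →₀ ℕ)} (hU : F.support ⊆ U) :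
    coeff e (contract g F)
      = ∑ b ∈ U, if e ≤ b then coeff (b - e) g * coeff b F else 0 := by
  rw [coeff_contract]
  refine Finset.sum_subset hU fun b _ hb => ?_
  rw [notMem_support_iff.mp hb, mul_zero, ite_self]

lemma contract_zero_right {σ : Type*} (g : MvPolynomial σ k) : contract g 0 = 0 := by
  ext e
  rw [coeff_contract]
  simp

lemma contract_add_left {σ : Type*} (g h F : MvPolynomial σ k) :
    contract (g + h) F = contract g F + contract h F := by
  ext e
  rw [coeff_add, coeff_contract, coeff_contract, coeff_contract,
    ← Finset.sum_add_distrib]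
  refine Finset.sum_congr rfl fun b _ => ?_
  by_cases hb : e ≤ b
  · simp [hb, coeff_add, add_mul]
  · simp [hb]

lemma contract_mul_left {σ : Type*} (p g F : MvPolynomial σ k) :
    contract (p * g) F = contract p (contract g F) := by
  classical
  ext e
  set U : Finset (σ →₀ ℕ) := F.support.biUnion (fun c => Finset.Icc 0 c) with hUdef
  have hsupp : (contract g F).support ⊆ U := by
    intro b hb
    rw [mem_support_iff, coeff_contract] at hb
    obtain ⟨c, hc, hne⟩ := Finset.exists_ne_zero_of_sum_ne_zero hb
    by_cases hbc : b ≤ c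
    · exact Finset.mem_biUnion.mpr ⟨c, hc, Finset.mem_Icc.mpr ⟨zero_le, hbc⟩⟩
    · exact absurd (if_neg hbc) hne
  rw [coeff_contract_superset p (contract g F) e hsupp, coeff_contract]
  have step1 : ∀ b ∈ U,
      (if e ≤ b then coeff (b - e) p * coeff b (contract g F) else 0)
        = ∑ c ∈ F.support, if e ≤ b ∧ b ≤ c
            then coeff (b - e) p * coeff (c - b) g * coeff c F else 0 := by
    intro b _
    rw [coeff_contract]
    by_cases hb : e ≤ b
    · simp only [hb, true_and, if_true, Finset.mul_sum]
      refine Finset.sum_congr rfl fun c _ => ?_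
      by_cases hbc : b ≤ c
      · simp [hbc, mul_assoc]
      · simp [hbc]
    · simp [hb]
  rw [Finset.sum_congr rfl step1, Finset.sum_comm]
  refine Finset.sum_congr rfl fun c hc => ?_
  by_cases hec : e ≤ c
  · rw [if_pos hec, coeff_mul, Finset.sum_mul]
    have hfilter : ∀ b ∈ U, (if e ≤ b ∧ b ≤ c
        then coeff (b - e) p * coeff (c - b) g * coeff c F else 0)
          = if b ∈ Finset.Icc e c
              then coeff (b - e) p * coeff (c - b) g * coeff c F else 0 := by
      intro b _
      simp only [Finset.mem_Icc]
    rw [Finset.sum_congr rfl hfilter, ← Finset.sum_filter]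
    have hIcc : U.filter (· ∈ Finset.Icc e c) = Finset.Icc e c := by
      ext b
      simp only [Finset.mem_filter, Finset.mem_Icc, and_iff_right_iff_imp]
      rintro ⟨-, hbc⟩
      exact Finset.mem_biUnion.mpr ⟨c, hc, Finset.mem_Icc.mpr ⟨zero_le, hbc⟩⟩
    rw [hIcc]
    refine Finset.sum_nbij' (i := fun x => e + x.1)
      (j := fun b => (b - e, c - b)) ?_ ?_ ?_ ?_ ?_
    · intro x hx
      rw [Finset.HasAntidiagonal.mem_antidiagonal] at hx
      rw [Finset.mem_Icc]
      refine ⟨le_add_right le_rfl, ?_⟩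
      calc e + x.1 ≤ e + (x.1 + x.2) := add_le_add_right (le_add_right le_rfl) e
        _ = e + (c - e) := by rw [hx]
        _ = c := add_tsub_cancel_of_le hec
    · intro b hb
      rw [Finset.mem_Icc] at hb
      rw [Finset.HasAntidiagonal.mem_antidiagonal, add_comm]
      exact tsub_add_tsub_cancel hb.2 hb.1
    · intro x hx
      rw [Finset.HasAntidiagonal.mem_antidiagonal] at hx
      have hc' : c = e + x.1 + x.2 := by
        rw [add_assoc, hx, add_tsub_cancel_of_le hec]
      have h1 : e + x.1 - e = x.1 := add_tsub_cancel_left e x.1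
      have h2 : c - (e + x.1) = x.2 := by
        rw [hc', add_tsub_cancel_left]
      simp only [h1, h2]
    · intro b hb
      rw [Finset.mem_Icc] at hb
      exact add_tsub_cancel_of_le hb.1
    · intro x hx
      have h1 : e + x.1 - e = x.1 := add_tsub_cancel_left e x.1
      have h2 : c - (e + x.1) = x.2 := by
        rw [Finset.HasAntidiagonal.mem_antidiagonal] at hx
        have hc' : c = e + x.1 + x.2 := by
          rw [add_assoc, hx, add_tsub_cancel_of_le hec]
        rw [hc', add_tsub_cancel_left]
      simp only [h1, h2]
  · rw [if_neg hec]
    refine (Finset.sum_eq_zero fun b _ => ?_).symm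
    rw [if_neg]
    rintro ⟨h1, h2⟩
    exact hec (h1.trans h2)

lemma contract_zero_left {σ : Type*} (F : MvPolynomial σ k) : contract 0 F = 0 := by
  ext e
  rw [coeff_contract]
  simp

def annihilatorIdeal {σ : Type*} (F : MvPolynomial σ k) : Ideal (MvPolynomial σ k) where
  carrier := annSet F
  zero_mem' := contract_zero_left F
  add_mem' := by
    intro a b ha hb
    have ha' : contract a F = 0 := ha
    have hb' : contract b F = 0 := hb
    show contract (a + b) F = 0
    rw [contract_add_left, ha', hb', add_zero]
  smul_mem' := by
    intro c g hg
    have hg' : contract g F = 0 := hg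
    show contract (c * g) F = 0
    rw [contract_mul_left, hg', contract_zero_right]

lemma mem_annIdeal_iff {σ : Type*} (F g : MvPolynomial σ k) :
    g ∈ annIdeal F ↔ contract g F = 0 := by
  have : annIdeal F = annihilatorIdeal F := Ideal.span_eq (annihilatorIdeal F)
  rw [this]
  exact Iff.rfl

lemma coeff_contract_monomial_one {σ : Type*} (g : MvPolynomial σ k) (d e : σ →₀ ℕ) :
    coeff e (contract g (monomial d (1 : k)))
      = if e ≤ d then coeff (d - e) g else 0 := by
  classical
  rw [coeff_contract, support_monomial, if_neg one_ne_zero, Finset.sum_singleton,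
    coeff_monomial, if_pos rfl]
  by_cases h : e ≤ d
  · rw [if_pos h, if_pos h, mul_one]
  · rw [if_neg h, if_neg h]

lemma contract_monomial_one_eq_zero_iff {σ : Type*} (g : MvPolynomial σ k) (d : σ →₀ ℕ) :
    contract g (monomial d (1 : k)) = 0 ↔ ∀ a ≤ d, coeff a g = 0 := by
  constructor
  · intro h a ha
    have := congrArg (coeff (d - a)) h
    rw [coeff_contract_monomial_one, if_pos tsub_le_self, tsub_tsub_cancel_of_le ha,
      coeff_zero] at this
    exact this
  · intro h
    ext e
    rw [coeff_contract_monomial_one, coeff_zero]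
    by_cases he : e ≤ d
    · rw [if_pos he, h _ tsub_le_self]
    · rw [if_neg he]

lemma le_single02_iff (a : Fin 2 →₀ ℕ) :
    a ≤ Finsupp.single 0 2 ↔ a 1 = 0 ∧ a 0 ≤ 2 := by
  rw [Finsupp.le_def]
  constructor
  · intro h
    refine ⟨Nat.le_zero.mp ?_, ?_⟩
    · simpa [Finsupp.single_apply] using h 1
    · simpa [Finsupp.single_apply] using h 0
  · rintro ⟨h1, h0⟩ i
    fin_cases i <;> simp [Finsupp.single_apply, h1, h0]

lemma hx3_ann : contract ((X 0 : MvPolynomial (Fin 2) k) ^ 3) (X 0 ^ 2) = 0 := by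
  classical
  rw [show ((X 0 : MvPolynomial (Fin 2) k) ^ 2) = monomial (Finsupp.single 0 2) 1 from
    X_pow_eq_monomial, contract_monomial_one_eq_zero_iff]
  intro a ha
  rw [coeff_X_pow, if_neg]
  rintro rfl
  rw [le_single02_iff] at ha
  simp at ha

lemma hy_ann : contract (X 1 : MvPolynomial (Fin 2) k) (X 0 ^ 2) = 0 := by
  classical
  rw [show ((X 0 : MvPolynomial (Fin 2) k) ^ 2) = monomial (Finsupp.single 0 2) 1 from
    X_pow_eq_monomial, contract_monomial_one_eq_zero_iff]
  intro a ha
  rw [coeff_X', if_neg]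
  rintro rfl
  rw [le_single02_iff] at ha
  simp at ha

lemma annIdeal_X0_sq :
    annIdeal ((X 0 : MvPolynomial (Fin 2) k) ^ 2)
      = Ideal.span {(X 0 : MvPolynomial (Fin 2) k) ^ 3, X 1} := by
  classical
  apply le_antisymm
  · rw [annIdeal]
    apply Ideal.span_le.mpr
    intro g hg
    have hg' : contract g ((X 0 : MvPolynomial (Fin 2) k) ^ 2) = 0 := hg
    rw [show ((X 0 : MvPolynomial (Fin 2) k) ^ 2) = monomial (Finsupp.single 0 2) 1 from
      X_pow_eq_monomial, contract_monomial_one_eq_zero_iff] at hg'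
    rw [SetLike.mem_coe]
    have hsum := as_sum g
    rw [hsum]
    refine Ideal.sum_mem _ fun e he => ?_
    have cne : coeff e g ≠ 0 := mem_support_iff.mp he
    by_cases h1 : e 1 = 0
    · have h3 : 3 ≤ e 0 := by
        by_contra h
        push_neg at h
        exact cne (hg' e (le_single02_iff e |>.mpr ⟨h1, Nat.lt_succ_iff.mp h⟩))
      have hle : Finsupp.single 0 3 ≤ e := Finsupp.single_le_iff.mpr h3
      have : monomial e (coeff e g)
          = X 0 ^ 3 * monomial (e - Finsupp.single 0 3) (coeff e g) := by
        rw [X_pow_eq_monomial, monomial_mul, one_mul, add_tsub_cancel_of_le hle]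
      rw [this]
      exact Ideal.mul_mem_right _ _ (Ideal.subset_span (by simp))
    · have hle : Finsupp.single 1 1 ≤ e :=
        Finsupp.single_le_iff.mpr (Nat.one_le_iff_ne_zero.mpr h1)
      have : monomial e (coeff e g)
          = X 1 * monomial (e - Finsupp.single 1 1) (coeff e g) := by
        rw [show (X 1 : MvPolynomial (Fin 2) k) = monomial (Finsupp.single 1 1) 1 by
          rw [← X_pow_eq_monomial, pow_one], monomial_mul, one_mul,
          add_tsub_cancel_of_le hle]
      rw [this]
      exact Ideal.mul_mem_right _ _ (Ideal.subset_span (by simp))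
  · apply Ideal.span_le.mpr
    rintro p hp
    rcases hp with rfl | hp
    · exact Ideal.subset_span hx3_ann
    · rw [Set.mem_singleton_iff] at hp
      subst hp
      exact Ideal.subset_span hy_ann

lemma decomp (p : MvPolynomial (Fin 3) k) :
    ∃ (r₀ r₁ r₂ : MvPolynomial (Fin 2) k) (q : MvPolynomial (Fin 3) k),
      p = rename Fin.castSucc r₀ + X 2 * rename Fin.castSucc r₁
        + X 2 ^ 2 * rename Fin.castSucc r₂ + X 2 ^ 3 * q := by
  classical
  induction p using MvPolynomial.induction_on' with
  | monomial e c =>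
    set d : Fin 2 →₀ ℕ := Finsupp.single 0 (e 0) + Finsupp.single 1 (e 1) with hd
    have hcs0 : (Fin.castSucc (0 : Fin 2)) = (0 : Fin 3) := rfl
    have hcs1 : (Fin.castSucc (1 : Fin 2)) = (1 : Fin 3) := rfl
    have he : e = Finsupp.single (0 : Fin 3) (e 0) + Finsupp.single 1 (e 1)
        + Finsupp.single 2 (e 2) := by
      ext i
      fin_cases i <;> simp [Finsupp.single_apply]
    have key : monomial e c
        = rename Fin.castSucc (monomial d c) * X 2 ^ (e 2) := by
      rw [rename_monomial, X_pow_eq_monomial, monomial_mul, mul_one, hd,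
        Finsupp.mapDomain_add, Finsupp.mapDomain_single, Finsupp.mapDomain_single,
        hcs0, hcs1, ← he]
    generalize e 2 = n at key
    match n with
    | 0 =>
      refine ⟨monomial d c, 0, 0, 0, ?_⟩
      simp only [key, pow_zero, mul_one, map_zero, mul_zero, add_zero]
    | 1 =>
      refine ⟨0, monomial d c, 0, 0, ?_⟩
      simp only [key, pow_one, map_zero, mul_zero, add_zero, zero_add]
      ring
    | 2 =>
      refine ⟨0, 0, monomial d c, 0, ?_⟩
      simp only [key, map_zero, mul_zero, add_zero, zero_add]
      ring
    | (m + 3) =>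
      refine ⟨0, 0, 0, X 2 ^ m * rename Fin.castSucc (monomial d c), ?_⟩
      simp only [key, map_zero, mul_zero, add_zero, zero_add]
      ring
  | add p q hp hq =>
    obtain ⟨a₀, a₁, a₂, aq, ha⟩ := hp
    obtain ⟨b₀, b₁, b₂, bq, hb⟩ := hq
    refine ⟨a₀ + b₀, a₁ + b₁, a₂ + b₂, aq + bq, ?_⟩
    rw [ha, hb]
    simp only [map_add]
    ring

section Fspecific

variable (F : MvPolynomial (Fin 3) k)

def uu : Fin 3 →₀ ℕ := Finsupp.single 2 2 + Finsupp.single 0 2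
def vv : Fin 3 →₀ ℕ := Finsupp.single 2 1 + Finsupp.single 0 2 + Finsupp.single 1 1

lemma hXdef {σ : Type*} (i : σ) :
    (X i : MvPolynomial σ k) = monomial (Finsupp.single i 1) 1 := by
  rw [← X_pow_eq_monomial, pow_one]

lemma hFm (hF : F = X 2 ^ 2 * X 0 ^ 2 + X 2 * X 0 ^ 2 * X 1) : F = monomial (uu) 1 + monomial (vv) 1 := by
  rw [hF, uu, vv]
  simp only [hXdef, monomial_pow, one_pow, monomial_mul, one_mul, mul_one,
    Finsupp.smul_single, smul_eq_mul, Nat.mul_one]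

lemma uu_ne_vv : (uu : Fin 3 →₀ ℕ) ≠ vv := by
  intro h
  have := congrArg (fun f : Fin 3 →₀ ℕ => f 1) h
  simp [uu, vv, Finsupp.single_apply] at this

lemma coeff_uu (hF : F = X 2 ^ 2 * X 0 ^ 2 + X 2 * X 0 ^ 2 * X 1) : coeff (uu) F = 1 := by
  classical
  rw [hFm F hF, coeff_add, coeff_monomial, coeff_monomial, if_pos rfl,
    if_neg (Ne.symm uu_ne_vv), add_zero]

lemma coeff_vv (hF : F = X 2 ^ 2 * X 0 ^ 2 + X 2 * X 0 ^ 2 * X 1) : coeff (vv) F = 1 := by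
  classical
  rw [hFm F hF, coeff_add, coeff_monomial, coeff_monomial, if_pos rfl,
    if_neg (uu_ne_vv), zero_add]

lemma supp_F (hF : F = X 2 ^ 2 * X 0 ^ 2 + X 2 * X 0 ^ 2 * X 1) : F.support ⊆ {uu, vv} := by
  classical
  intro b hb
  rw [hFm F hF] at hb
  rcases Finset.mem_union.mp (support_add hb) with h | h <;>
    rw [support_monomial, if_neg one_ne_zero, Finset.mem_singleton] at h <;>
    simp [h]

lemma coeff_contract_F (hF : F = X 2 ^ 2 * X 0 ^ 2 + X 2 * X 0 ^ 2 * X 1) (G : MvPolynomial (Fin 3) k) (e : Fin 3 →₀ ℕ) :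
    coeff e (contract G F)
      = (if e ≤ uu then coeff (uu - e) G else 0)
        + (if e ≤ vv then coeff (vv - e) G else 0) := by
  classical
  rw [coeff_contract_superset G F e (supp_F F hF), Finset.sum_insert
    (Finset.notMem_singleton.mpr uu_ne_vv), Finset.sum_singleton,
    coeff_uu F hF, coeff_vv F hF, mul_one, mul_one]

lemma contract_X23 (hF : F = X 2 ^ 2 * X 0 ^ 2 + X 2 * X 0 ^ 2 * X 1) : contract ((X 2 : MvPolynomial (Fin 3) k) ^ 3) F = 0 := by
  classical
  ext e
  rw [coeff_contract_F F hF, coeff_zero]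
  have hu : coeff (uu - e) ((X 2 : MvPolynomial (Fin 3) k) ^ 3) = 0 := by
    rw [coeff_X_pow, if_neg]
    intro h
    have := congrArg (fun f : Fin 3 →₀ ℕ => f 2) h
    simp only [Finsupp.tsub_apply] at this
    simp [uu, Finsupp.single_apply] at this
    omega
  have hv : coeff (vv - e) ((X 2 : MvPolynomial (Fin 3) k) ^ 3) = 0 := by
    rw [coeff_X_pow, if_neg]
    intro h
    have := congrArg (fun f : Fin 3 →₀ ℕ => f 2) h
    simp only [Finsupp.tsub_apply] at this
    simp [vv, Finsupp.single_apply] at this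
    omega
  rw [hu, hv, ite_self, ite_self, add_zero]

lemma no_g (hF : F = X 2 ^ 2 * X 0 ^ 2 + X 2 * X 0 ^ 2 * X 1) : ¬ ∃ g₀ g₁ : MvPolynomial (Fin 2) k,
    contract (X 2 ^ 2 * rename Fin.castSucc g₀ + X 2 * rename Fin.castSucc g₁
      + rename Fin.castSucc (X 1)) F = 0 := by
  classical
  rintro ⟨g₀, g₁, h⟩
  set G : MvPolynomial (Fin 3) k :=
    X 2 ^ 2 * rename Fin.castSucc g₀ + X 2 * rename Fin.castSucc g₁
      + rename Fin.castSucc (X 1) with hG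
  have hcs1 : (Fin.castSucc (1 : Fin 2)) = (1 : Fin 3) := rfl
  have hren : rename Fin.castSucc (X 1 : MvPolynomial (Fin 2) k)
      = (X 1 : MvPolynomial (Fin 3) k) := by rw [rename_X, hcs1]
  -- coefficient of G at single 2 1 (i.e. t) is coeff 0 g₁
  have hc0 : coeff (Finsupp.single 2 1) G = coeff 0 g₁ := by
    rw [hG, coeff_add, coeff_add, X_pow_eq_monomial, hXdef (2 : Fin 3),
      coeff_monomial_mul', coeff_monomial_mul', if_neg, if_pos le_rfl, tsub_self,
      hren, hXdef (1 : Fin 3), coeff_monomial, if_neg]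
    · rw [one_mul, zero_add, add_zero]
      have := coeff_rename_mapDomain (Fin.castSucc : Fin 2 → Fin 3)
        (Fin.castSucc_injective 2) g₁ 0
      simpa using this
    · intro hfe
      have := congrArg (fun f : Fin 3 →₀ ℕ => f 1) hfe
      simp [Finsupp.single_apply] at this
    · rw [Finsupp.single_le_iff]
      simp [Finsupp.single_apply]
  -- coefficient of G at single 1 1 (i.e. y) is 1
  have hc1 : coeff (Finsupp.single 1 1) G = 1 := by
    rw [hG, coeff_add, coeff_add, X_pow_eq_monomial, hXdef (2 : Fin 3),
      coeff_monomial_mul', coeff_monomial_mul', if_neg, if_neg,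
      hren, hXdef (1 : Fin 3), coeff_monomial, if_pos rfl]
    · rw [zero_add, zero_add]
    · rw [Finsupp.single_le_iff]
      simp [Finsupp.single_apply]
    · rw [Finsupp.single_le_iff]
      simp [Finsupp.single_apply]
  -- the two coefficients of contract G F
  have e1 : (Finsupp.single (0 : Fin 3) 2 + Finsupp.single 2 1 : Fin 3 →₀ ℕ) ≤ uu := by
    rw [Finsupp.le_def]
    intro i
    fin_cases i <;> simp [uu, Finsupp.single_apply]
  have e1v : (Finsupp.single (0 : Fin 3) 2 + Finsupp.single 2 1 : Fin 3 →₀ ℕ) ≤ vv := by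
    rw [Finsupp.le_def]
    intro i
    fin_cases i <;> simp [vv, Finsupp.single_apply]
  have d1u : uu - (Finsupp.single (0 : Fin 3) 2 + Finsupp.single 2 1)
      = Finsupp.single 2 1 := by
    ext i
    rw [Finsupp.tsub_apply]
    fin_cases i <;> simp [uu, Finsupp.single_apply]
  have d1v : vv - (Finsupp.single (0 : Fin 3) 2 + Finsupp.single 2 1)
      = Finsupp.single 1 1 := by
    ext i
    rw [Finsupp.tsub_apply]
    fin_cases i <;> simp [vv, Finsupp.single_apply]
  have e2u : ¬ (Finsupp.single (0 : Fin 3) 2 + Finsupp.single 1 1 : Fin 3 →₀ ℕ) ≤ uu := by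
    rw [Finsupp.le_def]
    push_neg
    refine ⟨1, ?_⟩
    simp [uu, Finsupp.single_apply]
  have e2v : (Finsupp.single (0 : Fin 3) 2 + Finsupp.single 1 1 : Fin 3 →₀ ℕ) ≤ vv := by
    rw [Finsupp.le_def]
    intro i
    fin_cases i <;> simp [vv, Finsupp.single_apply]
  have d2v : vv - (Finsupp.single (0 : Fin 3) 2 + Finsupp.single 1 1)
      = Finsupp.single 2 1 := by
    ext i
    rw [Finsupp.tsub_apply]
    fin_cases i <;> simp [vv, Finsupp.single_apply]
  have hA := congrArg (coeff (Finsupp.single (0 : Fin 3) 2 + Finsupp.single 2 1)) h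
  rw [coeff_contract_F F hF, if_pos e1, if_pos e1v, d1u, d1v, hc0, hc1, coeff_zero] at hA
  have hB := congrArg (coeff (Finsupp.single (0 : Fin 3) 2 + Finsupp.single 1 1)) h
  rw [coeff_contract_F F hF, if_neg e2u, if_pos e2v, d2v, hc0, coeff_zero, zero_add] at hB
  rw [hB, zero_add] at hA
  exact one_ne_zero hA

end Fspecific

/-- Example 3.9 (Example ex:1).  Let `R = k[x,y]`, `S = k[x,y,t]` (variables `x = X 0`,
`y = X 1`, `t = X 2` of `Fin 3`), and `F = T²X² + TX²Y ∈ Q_S`.  There are no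
`g_0, g_1 ∈ R` with `t²g_0 + t g_1 + y ∈ Ann_S(F)`; consequently `C = S/Ann_S(F)` is not
a free extension of `A = k[t]/(t³)` with fiber `B = k[x,y]/Ann_R(X²) = k[x,y]/(x³,y)`:
it fails the condition that for every `g ∈ Ann_R(X²)` there exist `g_0, g_1` with
`t²g_0 + tg_1 + g ∈ Ann_S(F)`, and for the maps `ι, π` it is not a free extension. -/
theorem example_not_free_extension
    (F : MvPolynomial (Fin 3) k) (hF : F = X 2 ^ 2 * X 0 ^ 2 + X 2 * X 0 ^ 2 * X 1)
    (ι : (Polynomial k ⧸ Ideal.span {(Polynomial.X : Polynomial k) ^ 3}) →ₐ[k]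
      (MvPolynomial (Fin 3) k ⧸ annIdeal F))
    (hι : ι (Ideal.Quotient.mk _ Polynomial.X) = Ideal.Quotient.mk _ (X 2))
    (π : (MvPolynomial (Fin 3) k ⧸ annIdeal F) →ₐ[k]
      (MvPolynomial (Fin 2) k ⧸ annIdeal ((X 0 : MvPolynomial (Fin 2) k) ^ 2)))
    (hπ : ∀ s : MvPolynomial (Fin 3) k,
      π (Ideal.Quotient.mk _ s) = Ideal.Quotient.mk _ (aeval ![X 0, X 1, 0] s)) :
    -- B = k[x,y]/Ann(X²) = k[x,y]/(x³, y)
    annIdeal ((X 0 : MvPolynomial (Fin 2) k) ^ 2)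
      = Ideal.span {(X 0 : MvPolynomial (Fin 2) k) ^ 3, X 1} ∧
    -- there are no g₀, g₁ with t²g₀ + tg₁ + y ∈ Ann_S(F)
    (¬ ∃ g₀ g₁ : MvPolynomial (Fin 2) k,
      contract (X 2 ^ 2 * rename Fin.castSucc g₀ + X 2 * rename Fin.castSucc g₁
        + rename Fin.castSucc (X 1)) F = 0) ∧
    -- the free-extension criterion of Lemma 3.4 fails
    (¬ ∀ g ∈ annSet ((X 0 : MvPolynomial (Fin 2) k) ^ 2),
      ∃ g₀ g₁ : MvPolynomial (Fin 2) k,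
        contract (X 2 ^ 2 * rename Fin.castSucc g₀ + X 2 * rename Fin.castSucc g₁
          + rename Fin.castSucc g) F = 0) ∧
    -- C is not a free extension of A with fiber B
    ¬ (freeVia ι.toRingHom ∧ Function.Surjective π ∧
        RingHom.ker π = Ideal.span {Ideal.Quotient.mk (annIdeal F) (X 2)}) := by
  refine ⟨annIdeal_X0_sq, no_g F hF, ?_, ?_⟩
  · intro hall
    exact no_g F hF (hall (X 1) hy_ann)
  · rintro ⟨-, -, hker⟩
    have hren : rename Fin.castSucc (X 1 : MvPolynomial (Fin 2) k)
        = (X 1 : MvPolynomial (Fin 3) k) := by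
      rw [rename_X, show Fin.castSucc (1 : Fin 2) = (1 : Fin 3) from rfl]
    have hy2 : π (Ideal.Quotient.mk (annIdeal F) (X 1)) = 0 := by
      rw [hπ (X 1)]
      have haev : (aeval ![X 0, X 1, 0] (X 1 : MvPolynomial (Fin 3) k))
          = (X 1 : MvPolynomial (Fin 2) k) := by simp
      rw [haev, Ideal.Quotient.eq_zero_iff_mem]
      exact Ideal.subset_span hy_ann
    have hk : Ideal.Quotient.mk (annIdeal F) (X 1)
        ∈ Ideal.span {Ideal.Quotient.mk (annIdeal F) (X 2)} := by
      rw [← hker, RingHom.mem_ker]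
      exact hy2
    obtain ⟨z, hz⟩ := Ideal.mem_span_singleton'.mp hk
    obtain ⟨s, rfl⟩ := Ideal.Quotient.mk_surjective z
    have hmem : (X 1 - s * X 2 : MvPolynomial (Fin 3) k) ∈ annIdeal F := by
      rw [← Ideal.Quotient.eq_zero_iff_mem, map_sub, map_mul, hz, sub_self]
    have hc : contract (X 1 - s * X 2 : MvPolynomial (Fin 3) k) F = 0 :=
      (mem_annIdeal_iff F _).mp hmem
    obtain ⟨r₀, r₁, r₂, q, hs⟩ := decomp s
    have h3 : contract ((X 2 : MvPolynomial (Fin 3) k) ^ 3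
        * (rename Fin.castSucc r₂ + X 2 * q)) F = 0 := by
      rw [mul_comm, contract_mul_left, contract_X23 F hF, contract_zero_right]
    have heq : (X 2 ^ 2 * rename Fin.castSucc (-r₁) + X 2 * rename Fin.castSucc (-r₀)
        + rename Fin.castSucc (X 1) : MvPolynomial (Fin 3) k)
        = (X 1 - s * X 2) + X 2 ^ 3 * (rename Fin.castSucc r₂ + X 2 * q) := by
      rw [hs, map_neg, map_neg, hren]
      ring
    exact no_g F hF ⟨-r₁, -r₀, by rw [heq, contract_add_left, hc, h3, add_zero]⟩

end
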